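/- Fix integers r > q ≥ 1 and s ≥ 0, and identify each point p ∈ ℝ^{rq(s+1)} with the r×q real polynomial matrix C_p(z) of degree at most s whose rq(s+1) coefficients are the entries of p. Then the set of p ∈ ℝ^{rq(s+1)} for which C_p fails to be zeroless (i.e. for which there exists z ∈ ℂ with rank C_p(z) < q) is nowhere dense in ℝ^{rq(s+1)}. In particular, generically the matrices C_p(1) and C_p(0) have full rank q. -/

import Mathlib

open MvPolynomial Polynomial

lemma AD_line {ι : Type*} (Φ : MvPolynomial ι ℝ) (x d : ι → ℝ) (t : ℝ) :
    MvPolynomial.eval (fun i => x i + t * d i) Φ =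
    Polynomial.eval t (MvPolynomial.eval₂ Polynomial.C
      (fun i => Polynomial.C (x i) + Polynomial.C (d i) * Polynomial.X) Φ) := by
  rw [show Polynomial.eval t (MvPolynomial.eval₂ Polynomial.C
      (fun i => Polynomial.C (x i) + Polynomial.C (d i) * Polynomial.X) Φ)
      = (Polynomial.evalRingHom t) (MvPolynomial.eval₂ Polynomial.C
      (fun i => Polynomial.C (x i) + Polynomial.C (d i) * Polynomial.X) Φ) from rfl,
    MvPolynomial.eval₂_comp_left]
  rw [MvPolynomial.eval, coe_eval₂Hom]
  congr 1
  · ext a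
    simp only [RingHom.comp_apply, Polynomial.coe_evalRingHom, Polynomial.eval_C,
      RingHom.id_apply]
  · funext i
    simp only [Function.comp_apply, Polynomial.coe_evalRingHom, Polynomial.eval_add,
      Polynomial.eval_C, Polynomial.eval_mul, Polynomial.eval_X]
    ring

lemma AD_zeroset_nwd {ι : Type*} [Fintype ι] (Φ : MvPolynomial ι ℝ) (x₀ : ι → ℝ)
    (h0 : MvPolynomial.eval x₀ Φ ≠ 0) :
    IsNowhereDense {p : ι → ℝ | MvPolynomial.eval p Φ = 0} := by
  have hc : IsClosed {p : ι → ℝ | MvPolynomial.eval p Φ = 0} :=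
    isClosed_eq (MvPolynomial.continuous_eval Φ) continuous_const
  rw [hc.isNowhereDense_iff]
  by_contra h
  obtain ⟨x, hx⟩ := Set.nonempty_iff_ne_empty.2 h
  obtain ⟨ε, hε, hball⟩ := Metric.isOpen_iff.1 isOpen_interior x hx
  have key : ∀ y : ι → ℝ, MvPolynomial.eval y Φ = 0 := by
    intro y
    set Ψ := MvPolynomial.eval₂ Polynomial.C
      (fun i => Polynomial.C (x i) + Polynomial.C (y i - x i) * Polynomial.X) Φ with hΨ
    set δ : ℝ := ε / (dist y x + 1) with hδ
    have hδpos : 0 < δ := div_pos hε (by positivity)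
    have hroot : ∀ t : ℝ, |t| < δ → Ψ.IsRoot t := by
      intro t ht
      have hmem : (fun i => x i + t * (y i - x i)) ∈ Metric.ball x ε := by
        rw [Metric.mem_ball]
        have : (fun i => x i + t * (y i - x i)) = x + t • (y - x) := by
          funext i; simp [mul_comm]
        rw [this]
        have : dist (x + t • (y - x)) x = |t| * dist y x := by
          rw [dist_eq_norm, add_sub_cancel_left, norm_smul, Real.norm_eq_abs,
            dist_eq_norm]
        rw [this]
        calc |t| * dist y x ≤ δ * dist y x := by
              apply mul_le_mul_of_nonneg_right ht.le dist_nonneg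
          _ < ε := by
              rw [hδ, div_mul_eq_mul_div, div_lt_iff₀ (by positivity)]
              nlinarith [dist_nonneg (x := y) (y := x)]
      have := interior_subset (hball hmem)
      have h2 := AD_line Φ x (y - x) t
      simp only [Pi.sub_apply] at h2
      rw [Set.mem_setOf_eq] at this
      rw [Polynomial.IsRoot, hΨ, ← h2]
      exact this
    have hΨ0 : Ψ = 0 := by
      apply Polynomial.eq_zero_of_infinite_isRoot
      apply Set.Infinite.mono (s := Set.Ioo (-δ) δ)
      · intro t ht
        exact hroot t (abs_lt.2 ⟨ht.1, ht.2⟩)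
      · exact Set.Ioo_infinite (by linarith)
    have := AD_line Φ x (y - x) 1
    simp only [Pi.sub_apply, one_mul] at this
    rw [hΨ] at hΨ0
    rw [hΨ0] at this
    simpa using this
  exact h0 (key x₀)

lemma AD_nwd_mono {X : Type*} [TopologicalSpace X] {s t : Set X} (h : s ⊆ t)
    (ht : IsNowhereDense t) : IsNowhereDense s := by
  rw [IsNowhereDense] at ht ⊢
  exact Set.eq_empty_of_subset_empty (ht ▸ interior_mono (closure_mono h))

def AD_curry (a b c : Type*) : ((a → b → c → ℝ)) ≃ₜ ((a × b × c) → ℝ) where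
  toFun p := fun v => p v.1 v.2.1 v.2.2
  invFun f := fun i j k => f (i, j, k)
  left_inv p := rfl
  right_inv f := rfl
  continuous_toFun := continuous_pi fun v =>
    (continuous_apply v.2.2).comp ((continuous_apply v.2.1).comp (continuous_apply v.1))
  continuous_invFun := continuous_pi fun i => continuous_pi fun j => continuous_pi fun k =>
    continuous_apply (i, j, k)

lemma AD_nwd_preimage {a b c : Type*} {Z : Set ((a × b × c) → ℝ)} (hZ : IsNowhereDense Z) :
    IsNowhereDense ((AD_curry a b c) ⁻¹' Z) := by
  rw [IsNowhereDense, ← Homeomorph.preimage_closure, ← Homeomorph.preimage_interior, hZ]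
  simp

open MvPolynomial Polynomial Matrix



abbrev ADvar (r q s : ℕ) := Fin r × Fin q × Fin (s+1)
abbrev ADR (r q s : ℕ) := MvPolynomial (ADvar r q s) ℝ

noncomputable def ADf (r q s : ℕ) (e : Fin q → Fin r) : Polynomial (ADR r q s) :=
  Matrix.det (Matrix.of fun i j : Fin q =>
    ∑ k : Fin (s+1), Polynomial.C (MvPolynomial.X (e i, j, k)) * Polynomial.X ^ (k:ℕ))

lemma AD_natDegree_det_le {R : Type*} [CommRing R] {n t : ℕ}
    (M : Matrix (Fin n) (Fin n) (Polynomial R)) (h : ∀ i j, (M i j).natDegree ≤ t) :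
    (Matrix.det M).natDegree ≤ n * t := by
  rw [Matrix.det_apply']
  apply Polynomial.natDegree_sum_le_of_forall_le
  intro σ _
  apply le_trans (Polynomial.natDegree_mul_le)
  rw [Polynomial.natDegree_intCast, zero_add]
  apply le_trans (Polynomial.natDegree_prod_le _ _)
  calc ∑ i : Fin n, (M (σ i) i).natDegree ≤ ∑ _i : Fin n, t :=
        Finset.sum_le_sum fun i _ => h _ _
    _ = n * t := by simp [Finset.sum_const]

lemma ADf_natDegree_le (r q s : ℕ) (e : Fin q → Fin r) :
    (ADf r q s e).natDegree ≤ q * s := by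
  rw [ADf]
  apply AD_natDegree_det_le
  intro i j
  rw [Matrix.of_apply]
  apply Polynomial.natDegree_sum_le_of_forall_le
  intro k _
  apply le_trans (Polynomial.natDegree_mul_le)
  simp only [Polynomial.natDegree_C, zero_add, Polynomial.natDegree_pow,
    Polynomial.natDegree_X, mul_one]
  omega

lemma ADf_eval (r q s : ℕ) {A : Type*} [CommRing A] (φ : ADR r q s →+* A) (z : A)
    (e : Fin q → Fin r) :
    ((ADf r q s e).map φ).eval z
      = Matrix.det (Matrix.of fun i j : Fin q =>
          ∑ k : Fin (s+1), φ (MvPolynomial.X (e i, j, k)) * z ^ (k:ℕ)) := by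
  have h : ((ADf r q s e).map φ).eval z
      = ((Polynomial.evalRingHom z).comp (Polynomial.mapRingHom φ)) (ADf r q s e) := rfl
  rw [h, ADf, RingHom.map_det]
  congr 1
  ext i j
  simp [Matrix.map_apply, Polynomial.map_sum, Polynomial.map_mul, Polynomial.map_pow,
    Polynomial.map_C, Polynomial.map_X, Polynomial.eval_finset_sum]

lemma ADf_map (r q s : ℕ) (P : ADvar r q s → ℝ) (e : Fin q → Fin r) :
    (ADf r q s e).map (MvPolynomial.eval P : ADR r q s →+* ℝ)
      = Matrix.det (Matrix.of fun i j : Fin q =>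
          ∑ k : Fin (s+1), Polynomial.C (P (e i, j, k)) * Polynomial.X ^ (k:ℕ)) := by
  have h : (ADf r q s e).map (MvPolynomial.eval P : ADR r q s →+* ℝ)
      = (Polynomial.mapRingHom (MvPolynomial.eval P : ADR r q s →+* ℝ)) (ADf r q s e) := rfl
  rw [h, ADf, RingHom.map_det]
  congr 1
  ext i j : 2
  simp only [RingHom.mapMatrix_apply, Matrix.map_apply, Matrix.of_apply, RingHom.coe_coe,
    Polynomial.coe_mapRingHom,
    Polynomial.map_sum, Polynomial.map_mul, Polynomial.map_pow,
    Polynomial.map_C, Polynomial.map_X, MvPolynomial.eval_X]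





def ADsyl (R : Type*) [CommRing R] (d : ℕ) (a b : ℕ → R) :
    Matrix (Fin (d+d)) (Fin (d+d)) R :=
  Matrix.of fun i j =>
    if (i:ℕ) < d then (if (i:ℕ) ≤ (j:ℕ) then a ((j:ℕ) - (i:ℕ)) else 0)
    else (if (i:ℕ) - d ≤ (j:ℕ) then b ((j:ℕ) - ((i:ℕ) - d)) else 0)

lemma ADsyl_map {R S : Type*} [CommRing R] [CommRing S] (φ : R →+* S) (d : ℕ) (a b : ℕ → R) :
    (ADsyl R d a b).map φ = ADsyl S d (φ ∘ a) (φ ∘ b) := by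
  ext i j
  simp only [ADsyl, Matrix.map_apply, Matrix.of_apply, apply_ite φ, map_zero, Function.comp]

lemma AD_rowdot (P : Polynomial ℂ) (z : ℂ) {n c : ℕ} (h : P.natDegree + c < n) :
    ∑ j : Fin n, (if c ≤ (j:ℕ) then P.coeff ((j:ℕ) - c) else 0) * z ^ (j:ℕ)
      = z ^ c * P.eval z := by
  rw [Fin.sum_univ_eq_sum_range (fun j => (if c ≤ j then P.coeff (j - c) else 0) * z ^ j) n]
  rw [Finset.range_eq_Ico, ← Finset.sum_Ico_consecutive _ (Nat.zero_le c) (by omega : c ≤ n)]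
  have h1 : ∑ j ∈ Finset.Ico 0 c, (if c ≤ j then P.coeff (j - c) else 0) * z ^ j = 0 := by
    apply Finset.sum_eq_zero
    intro j hj
    rw [Finset.mem_Ico] at hj
    rw [if_neg (by omega), zero_mul]
  rw [h1, zero_add, Finset.sum_Ico_eq_sum_range]
  have h2 : ∀ j ∈ Finset.range (n - c),
      (if c ≤ c + j then P.coeff (c + j - c) else 0) * z ^ (c + j)
        = z ^ c * (P.coeff j * z ^ j) := by
    intro j _
    rw [if_pos (by omega), Nat.add_sub_cancel_left, pow_add]
    ring
  rw [Finset.sum_congr rfl h2, ← Finset.mul_sum,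
    Polynomial.eval_eq_sum_range' (by omega : P.natDegree < n - c)]

lemma AD_syl_det_zero {d : ℕ} (hd : 0 < d) {F G : Polynomial ℂ}
    (hF : F.natDegree ≤ d) (hG : G.natDegree ≤ d) {z : ℂ}
    (hFz : F.eval z = 0) (hGz : G.eval z = 0) :
    (ADsyl ℂ d F.coeff G.coeff).det = 0 := by
  rw [← Matrix.exists_mulVec_eq_zero_iff]
  refine ⟨fun j => z ^ (j:ℕ), ?_, ?_⟩
  · intro h0
    have := congrFun h0 ⟨0, by omega⟩
    simp at this
  · funext i
    simp only [Matrix.mulVec, dotProduct, ADsyl, Matrix.of_apply, Pi.zero_apply]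
    by_cases hi : (i:ℕ) < d
    · simp only [if_pos hi]
      rw [AD_rowdot F z (by omega), hFz, mul_zero]
    · simp only [if_neg hi]
      rw [AD_rowdot G z (by omega), hGz, mul_zero]






def ADe0 {r q : ℕ} (h : q ≤ r) : Fin q → Fin r := fun j => ⟨(j:ℕ), lt_of_lt_of_le j.2 h⟩
def ADe1 {r q : ℕ} (h : q < r) : Fin q → Fin r := fun j => ⟨(j:ℕ)+1, by omega⟩

def ADp0 (r q s : ℕ) : ADvar r q s → ℝ := fun v =>
  if (v.1:ℕ) = (v.2.1:ℕ) ∧ (v.2.2:ℕ) = s then 1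
  else if (v.1:ℕ) = (v.2.1:ℕ)+1 ∧ (v.2.2:ℕ) = 0 then 1 else 0

lemma AD_sum_single (s c : ℕ) (f : Fin (s+1) → ℝ) (hc : c ≤ s)
    (hf : ∀ k : Fin (s+1), f k = if (k:ℕ) = c then 1 else 0) :
    ∑ k : Fin (s+1), Polynomial.C (f k) * Polynomial.X ^ (k:ℕ)
      = (Polynomial.X : Polynomial ℝ) ^ c := by
  rw [Finset.sum_eq_single (⟨c, by omega⟩ : Fin (s+1))]
  · rw [hf ⟨c, by omega⟩]
    simp
  · intro k _ hk
    rw [hf k, if_neg (by simpa [Fin.ext_iff] using hk), map_zero, zero_mul]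
  · simp
lemma AD_sum_zero (s : ℕ) (f : Fin (s+1) → ℝ)
    (hf : ∀ k : Fin (s+1), f k = 0) :
    ∑ k : Fin (s+1), Polynomial.C (f k) * Polynomial.X ^ (k:ℕ) = 0 := by
  apply Finset.sum_eq_zero
  intro k _
  rw [hf k, map_zero, zero_mul]

-- det of top block
lemma AD_det_top (r q s : ℕ) (h : q ≤ r) :
    Matrix.det (Matrix.of fun i j : Fin q =>
        ∑ k : Fin (s+1), Polynomial.C (ADp0 r q s (ADe0 h i, j, k)) * Polynomial.X ^ (k:ℕ))
      = (Polynomial.X : Polynomial ℝ) ^ (q*s) := by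
  have hB : (Matrix.of fun i j : Fin q =>
        ∑ k : Fin (s+1), Polynomial.C (ADp0 r q s (ADe0 h i, j, k)) * Polynomial.X ^ (k:ℕ))
      = Matrix.of (fun i j : Fin q => if (i:ℕ) = (j:ℕ) then (Polynomial.X : Polynomial ℝ)^s
          else if (i:ℕ) = (j:ℕ)+1 then 1 else 0) := by
    refine Matrix.ext fun i j => ?_
    simp only [Matrix.of_apply]
    by_cases h1 : (i:ℕ) = (j:ℕ)
    · rw [if_pos h1]
      apply AD_sum_single s s _ le_rfl
      intro k
      dsimp only [ADp0, ADe0]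
      by_cases h2 : (k:ℕ) = s
      · rw [if_pos ⟨h1, h2⟩, if_pos h2]
      · rw [if_neg (by tauto), if_neg h2, if_neg (by omega)]
    · rw [if_neg h1]
      by_cases h3 : (i:ℕ) = (j:ℕ)+1
      · rw [if_pos h3]
        have := AD_sum_single s 0 (fun k => ADp0 r q s (ADe0 h i, j, k)) (Nat.zero_le s) ?_
        · rw [this, pow_zero]
        · intro k
          dsimp only [ADp0, ADe0]
          by_cases h2 : (k:ℕ) = 0
          · rw [if_neg (by omega), if_pos ⟨h3, h2⟩, if_pos h2]
          · rw [if_neg (by omega), if_neg (by tauto), if_neg h2]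
      · rw [if_neg h3]
        apply AD_sum_zero
        intro k
        dsimp only [ADp0, ADe0]
        rw [if_neg (by omega), if_neg (by omega)]
  rw [hB]
  rw [Matrix.det_of_lowerTriangular _ ?_]
  · have hdiag : ∀ i : Fin q, (Matrix.of (fun i j : Fin q =>
        if (i:ℕ) = (j:ℕ) then (Polynomial.X : Polynomial ℝ)^s
          else if (i:ℕ) = (j:ℕ)+1 then 1 else 0)) i i = (Polynomial.X : Polynomial ℝ)^s :=
      fun i => by simp
    rw [Finset.prod_congr rfl (fun i _ => hdiag i), Finset.prod_const, Finset.card_univ,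
      Fintype.card_fin, ← pow_mul, mul_comm]
  · intro i j hij
    have : (i:ℕ) < (j:ℕ) := hij
    simp only [Matrix.of_apply]
    rw [if_neg (by omega), if_neg (by omega)]

lemma AD_det_bot (r q s : ℕ) (h : q < r) :
    Matrix.det (Matrix.of fun i j : Fin q =>
        ∑ k : Fin (s+1), Polynomial.C (ADp0 r q s (ADe1 h i, j, k)) * Polynomial.X ^ (k:ℕ))
      = 1 := by
  have hB : (Matrix.of fun i j : Fin q =>
        ∑ k : Fin (s+1), Polynomial.C (ADp0 r q s (ADe1 h i, j, k)) * Polynomial.X ^ (k:ℕ))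
      = Matrix.of (fun i j : Fin q => if (i:ℕ)+1 = (j:ℕ) then (Polynomial.X : Polynomial ℝ)^s
          else if (i:ℕ) = (j:ℕ) then 1 else 0) := by
    refine Matrix.ext fun i j => ?_
    simp only [Matrix.of_apply]
    by_cases h1 : (i:ℕ)+1 = (j:ℕ)
    · rw [if_pos h1]
      apply AD_sum_single s s _ le_rfl
      intro k
      dsimp only [ADp0, ADe1]
      by_cases h2 : (k:ℕ) = s
      · rw [if_pos ⟨h1, h2⟩, if_pos h2]
      · rw [if_neg (by tauto), if_neg h2, if_neg (by omega)]
    · rw [if_neg h1]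
      by_cases h3 : (i:ℕ) = (j:ℕ)
      · rw [if_pos h3]
        have := AD_sum_single s 0 (fun k => ADp0 r q s (ADe1 h i, j, k)) (Nat.zero_le s) ?_
        · rw [this, pow_zero]
        · intro k
          dsimp only [ADp0, ADe1]
          by_cases h2 : (k:ℕ) = 0
          · rw [if_neg (by omega), if_pos ⟨by omega, h2⟩, if_pos h2]
          · rw [if_neg (by omega), if_neg (by tauto), if_neg h2]
      · rw [if_neg h3]
        apply AD_sum_zero
        intro k
        dsimp only [ADp0, ADe1]
        rw [if_neg (by omega), if_neg (by omega)]
  rw [hB]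
  rw [Matrix.det_of_upperTriangular ?_]
  · have hdiag : ∀ i : Fin q, (Matrix.of (fun i j : Fin q =>
        if (i:ℕ)+1 = (j:ℕ) then (Polynomial.X : Polynomial ℝ)^s
          else if (i:ℕ) = (j:ℕ) then 1 else 0)) i i = 1 :=
      fun i => by simp
    rw [Finset.prod_congr rfl (fun i _ => hdiag i), Finset.prod_const, one_pow]
  · intro i j hij
    have : (j:ℕ) < (i:ℕ) := hij
    simp only [Matrix.of_apply]
    rw [if_neg (by omega), if_neg (by omega)]


def ADswap (d : ℕ) : Fin (d+d) → Fin (d+d) := fun i =>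
  if h : (i:ℕ) < d then ⟨(i:ℕ)+d, by omega⟩ else ⟨(i:ℕ)-d, by have := i.isLt; omega⟩

lemma ADswap_inv (d : ℕ) : Function.Involutive (ADswap d) := by
  intro i
  have hi := i.isLt
  by_cases h : (i:ℕ) < d
  · simp only [ADswap, dif_pos h]
    rw [dif_neg (by omega)]
    exact Fin.ext (show (i:ℕ) + d - d = (i:ℕ) by omega)
  · simp only [ADswap, dif_neg h]
    rw [dif_pos (by have := i.isLt; omega)]
    exact Fin.ext (show (i:ℕ) - d + d = (i:ℕ) by omega)

lemma AD_syl_perm (d : ℕ) :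
    ADsyl ℝ d (fun k => ((Polynomial.X : Polynomial ℝ)^d).coeff k)
      (fun k => (1 : Polynomial ℝ).coeff k)
      = ((Function.Involutive.toPerm _ (ADswap_inv d)).permMatrix ℝ) := by
  refine Matrix.ext fun i j => ?_
  rw [Equiv.Perm.permMatrix, PEquiv.toMatrix_toPEquiv_apply]
  simp only [Function.Involutive.coe_toPerm, ADswap, ADsyl, Matrix.of_apply,
    Polynomial.coeff_X_pow, Polynomial.coeff_one, Matrix.one_apply, Pi.single_apply, eq_comm (a := j)]
  have hj := j.isLt
  by_cases hi : (i:ℕ) < d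
  · rw [if_pos hi]
    simp only [dif_pos hi]
    by_cases hij : (j:ℕ) = (i:ℕ) + d
    · rw [if_pos (by omega : (i:ℕ) ≤ (j:ℕ)), if_pos (by omega : (j:ℕ) - (i:ℕ) = d),
        if_pos (Fin.ext (by simp only [Fin.val_mk]; omega))]
    · rw [if_neg (show ¬(⟨(i:ℕ)+d, by omega⟩ : Fin (d+d)) = j by
        rw [Fin.ext_iff]; simp only [Fin.val_mk]; omega)]
      by_cases hle : (i:ℕ) ≤ (j:ℕ)
      · rw [if_pos hle, if_neg (by omega)]
      · rw [if_neg hle]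
  · rw [if_neg hi]
    simp only [dif_neg hi]
    have hi2 := i.isLt
    by_cases hij : (j:ℕ) = (i:ℕ) - d
    · rw [if_pos (by omega : (i:ℕ) - d ≤ (j:ℕ)), if_pos (by omega : (j:ℕ) - ((i:ℕ) - d) = 0),
        if_pos (Fin.ext (by simp only [Fin.val_mk]; omega))]
    · rw [if_neg (show ¬(⟨(i:ℕ)-d, by have := i.isLt; omega⟩ : Fin (d+d)) = j by
        rw [Fin.ext_iff]; simp only [Fin.val_mk]; omega)]
      by_cases hle : (i:ℕ) - d ≤ (j:ℕ)
      · rw [if_pos hle, if_neg (by omega)]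
      · rw [if_neg hle]

lemma AD_syl_perm_det_ne (d : ℕ) :
    (ADsyl ℝ d (fun k => ((Polynomial.X : Polynomial ℝ)^d).coeff k)
      (fun k => (1 : Polynomial ℝ).coeff k)).det ≠ 0 := by
  rw [AD_syl_perm, Matrix.det_permutation]
  rcases Int.units_eq_one_or (Equiv.Perm.sign ((ADswap_inv d).toPerm _)) with h | h <;>
    rw [h] <;> norm_num


lemma AD_det_submatrix_eq_zero {K : Type*} [Field K] {r q : ℕ} {A : Matrix (Fin r) (Fin q) K}
    (e : Fin q → Fin r) (h : A.rank < q) : (A.submatrix e id).det = 0 := by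
  by_contra hd
  have hu : IsUnit (A.submatrix e id) :=
    (Matrix.isUnit_iff_isUnit_det _).2 (isUnit_iff_ne_zero.2 hd)
  have h1 : (A.submatrix e id).rank = q := by
    rw [Matrix.rank_of_isUnit _ hu, Fintype.card_fin]
  have h2 : A.submatrix e id = (Matrix.of fun (i : Fin q) (k : Fin r) =>
      if k = e i then (1:K) else 0) * A := by
    refine Matrix.ext fun i j => ?_
    rw [Matrix.mul_apply, Matrix.submatrix_apply]
    simp only [Matrix.of_apply, ite_mul, one_mul, zero_mul, id_eq]
    rw [Finset.sum_ite_eq' Finset.univ (e i) (fun k => A k j)]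
    simp
  have h3 := Matrix.rank_mul_le_right (Matrix.of fun (i : Fin q) (k : Fin r) =>
      if k = e i then (1:K) else 0) A
  rw [← h2, h1] at h3
  omega

lemma AD_sum_ind (s : ℕ) (c : Prop) [Decidable c] (z : ℝ) :
    ∑ k : Fin (s+1), (if c ∧ (k:ℕ) = 0 then (1:ℝ) else 0) * z ^ (k:ℕ)
      = if c then 1 else 0 := by
  rw [Finset.sum_eq_single (⟨0, by omega⟩ : Fin (s+1))]
  · simp
  · intro k _ hk
    rw [if_neg (by exact fun h => hk (Fin.ext h.2)), zero_mul]
  · simp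

def ADp1 (r q s : ℕ) : ADvar r q s → ℝ := fun v =>
  if (v.1:ℕ) = (v.2.1:ℕ) ∧ (v.2.2:ℕ) = 0 then 1 else 0

lemma AD_wit1 (r q s : ℕ) (hqr : q ≤ r) (z : ℝ) :
    ((ADf r q s (ADe0 hqr)).map (MvPolynomial.eval (ADp1 r q s) : ADR r q s →+* ℝ)).eval z
      = 1 := by
  rw [ADf_eval]
  have hM : (Matrix.of fun i j : Fin q => ∑ k : Fin (s+1),
      (MvPolynomial.eval (ADp1 r q s)) (MvPolynomial.X (ADe0 hqr i, j, k)) * z ^ (k:ℕ))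
      = (1 : Matrix (Fin q) (Fin q) ℝ) := by
    refine Matrix.ext fun i j => ?_
    rw [Matrix.of_apply]
    have hk : ∀ k : Fin (s+1),
        (MvPolynomial.eval (ADp1 r q s)) (MvPolynomial.X (ADe0 hqr i, j, k))
          = if ((i:ℕ) = (j:ℕ)) ∧ (k:ℕ) = 0 then 1 else 0 := by
      intro k
      rw [MvPolynomial.eval_X]
      rfl
    rw [Finset.sum_congr rfl (fun k _ => by rw [hk k]),
      AD_sum_ind s ((i:ℕ) = (j:ℕ)) z, Matrix.one_apply]
    simp [Fin.ext_iff]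
  rw [hM, Matrix.det_one]

lemma AD_mem (r q s : ℕ) (hqr : q ≤ r) (p : Fin r → Fin q → Fin (s+1) → ℝ) (z : ℝ)
    (h : (Matrix.of fun i j => ∑ k : Fin (s+1), p i j k * z ^ (k:ℕ)).rank < q) :
    ((ADf r q s (ADe0 hqr)).map
      (MvPolynomial.eval (fun v => p v.1 v.2.1 v.2.2) : ADR r q s →+* ℝ)).eval z = 0 := by
  rw [ADf_eval, ← AD_det_submatrix_eq_zero (ADe0 hqr) h]
  congr 1
  refine Matrix.ext fun i j => ?_
  simp [Matrix.submatrix_apply, MvPolynomial.eval_X]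

lemma AD_memC (r q s : ℕ) (e : Fin q → Fin r) (p : Fin r → Fin q → Fin (s+1) → ℝ) (z : ℂ)
    (h : (Matrix.of fun i j => ∑ k : Fin (s+1), (p i j k : ℂ) * z ^ (k:ℕ)).rank < q) :
    ((ADf r q s e).map
      (((algebraMap ℝ ℂ).comp (MvPolynomial.eval (fun v => p v.1 v.2.1 v.2.2)))
        : ADR r q s →+* ℂ)).eval z = 0 := by
  rw [ADf_eval, ← AD_det_submatrix_eq_zero e h]
  congr 1
  refine Matrix.ext fun i j => ?_
  simp [Matrix.submatrix_apply, MvPolynomial.eval_X]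

lemma AD_phi1_mem (r q s : ℕ) (hq : 1 ≤ q) (hs : 1 ≤ s) (hrq : q < r)
    (p : Fin r → Fin q → Fin (s+1) → ℝ) (z : ℂ)
    (h : (Matrix.of fun i j => ∑ k : Fin (s+1), (p i j k : ℂ) * z ^ (k:ℕ)).rank < q) :
    MvPolynomial.eval (fun v => p v.1 v.2.1 v.2.2)
      (Matrix.det (ADsyl (ADR r q s) (q*s)
        (fun k => (ADf r q s (ADe0 hrq.le)).coeff k)
        (fun k => (ADf r q s (ADe1 hrq)).coeff k))) = 0 := by
  set χ : ADR r q s →+* ℂ :=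
    (algebraMap ℝ ℂ).comp (MvPolynomial.eval (fun v => p v.1 v.2.1 v.2.2)) with hχ
  have hF : ((ADf r q s (ADe0 hrq.le)).map χ).eval z = 0 := AD_memC r q s _ p z h
  have hG : ((ADf r q s (ADe1 hrq)).map χ).eval z = 0 := AD_memC r q s _ p z h
  have hdF : ((ADf r q s (ADe0 hrq.le)).map χ).natDegree ≤ q*s :=
    le_trans (Polynomial.natDegree_map_le) (ADf_natDegree_le r q s _)
  have hdG : ((ADf r q s (ADe1 hrq)).map χ).natDegree ≤ q*s :=
    le_trans (Polynomial.natDegree_map_le) (ADf_natDegree_le r q s _)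
  have hdet := AD_syl_det_zero (Nat.mul_pos hq hs) hdF hdG hF hG
  have hχ0 : χ (Matrix.det (ADsyl (ADR r q s) (q*s)
      (fun k => (ADf r q s (ADe0 hrq.le)).coeff k)
      (fun k => (ADf r q s (ADe1 hrq)).coeff k))) = 0 := by
    rw [RingHom.map_det, RingHom.mapMatrix_apply, ADsyl_map]
    have e1 : (χ : ADR r q s →+* ℂ) ∘ (fun k => (ADf r q s (ADe0 hrq.le)).coeff k)
        = fun k => ((ADf r q s (ADe0 hrq.le)).map χ).coeff k := by
      funext k
      simp [Function.comp, Polynomial.coeff_map]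
    have e2 : (χ : ADR r q s →+* ℂ) ∘ (fun k => (ADf r q s (ADe1 hrq)).coeff k)
        = fun k => ((ADf r q s (ADe1 hrq)).map χ).coeff k := by
      funext k
      simp [Function.comp, Polynomial.coeff_map]
    rw [e1, e2]
    exact hdet
  rw [hχ, RingHom.comp_apply] at hχ0
  exact (algebraMap ℝ ℂ).injective (by rw [map_zero]; exact hχ0)

lemma AD_glue {r q s : ℕ} (Φ : ADR r q s) (x₀ : ADvar r q s → ℝ)
    (hx₀ : MvPolynomial.eval x₀ Φ ≠ 0) (S : Set (Fin r → Fin q → Fin (s+1) → ℝ))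
    (hS : ∀ p ∈ S, MvPolynomial.eval (fun v => p v.1 v.2.1 v.2.2) Φ = 0) :
    IsNowhereDense S := by
  apply AD_nwd_mono (t := (AD_curry (Fin r) (Fin q) (Fin (s+1))) ⁻¹'
    {P | MvPolynomial.eval P Φ = 0})
  · intro p hp
    exact hS p hp
  · exact AD_nwd_preimage (AD_zeroset_nwd Φ x₀ hx₀)

lemma AD_phi1_ne (r q s : ℕ) (hrq : q < r) :
    MvPolynomial.eval (ADp0 r q s)
      (Matrix.det (ADsyl (ADR r q s) (q*s)
        (fun k => (ADf r q s (ADe0 hrq.le)).coeff k)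
        (fun k => (ADf r q s (ADe1 hrq)).coeff k))) ≠ 0 := by
  have e1 : (MvPolynomial.eval (ADp0 r q s) : ADR r q s →+* ℝ)
      ∘ (fun k => (ADf r q s (ADe0 hrq.le)).coeff k)
      = fun k => ((Polynomial.X : Polynomial ℝ)^(q*s)).coeff k := by
    funext k
    simp only [Function.comp_apply]
    rw [← Polynomial.coeff_map, ADf_map, AD_det_top r q s hrq.le]
  have e2 : (MvPolynomial.eval (ADp0 r q s) : ADR r q s →+* ℝ)
      ∘ (fun k => (ADf r q s (ADe1 hrq)).coeff k)
      = fun k => (1 : Polynomial ℝ).coeff k := by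
    funext k
    simp only [Function.comp_apply]
    rw [← Polynomial.coeff_map, ADf_map, AD_det_bot r q s hrq]
  rw [show MvPolynomial.eval (ADp0 r q s)
      (Matrix.det (ADsyl (ADR r q s) (q*s)
        (fun k => (ADf r q s (ADe0 hrq.le)).coeff k)
        (fun k => (ADf r q s (ADe1 hrq)).coeff k)))
    = (MvPolynomial.eval (ADp0 r q s) : ADR r q s →+* ℝ)
      (Matrix.det (ADsyl (ADR r q s) (q*s)
        (fun k => (ADf r q s (ADe0 hrq.le)).coeff k)
        (fun k => (ADf r q s (ADe1 hrq)).coeff k))) from rfl,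
    RingHom.map_det, RingHom.mapMatrix_apply, ADsyl_map, e1, e2]
  exact AD_syl_perm_det_ne (q*s)

theorem stmt_3 (r q s : ℕ) (hq : 1 ≤ q) (hrq : q < r) :
    IsNowhereDense {p : Fin r → Fin q → Fin (s + 1) → ℝ |
      ∃ z : ℂ, (Matrix.of fun i j => ∑ k : Fin (s + 1), (p i j k : ℂ) * z ^ (k : ℕ)).rank < q} ∧
    IsNowhereDense {p : Fin r → Fin q → Fin (s + 1) → ℝ |
      (Matrix.of fun i j => ∑ k : Fin (s + 1), p i j k * (1 : ℝ) ^ (k : ℕ)).rank ≠ q} ∧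
    IsNowhereDense {p : Fin r → Fin q → Fin (s + 1) → ℝ |
      (Matrix.of fun i j => ∑ k : Fin (s + 1), p i j k * (0 : ℝ) ^ (k : ℕ)).rank ≠ q} := by
  have hqr : q ≤ r := hrq.le
  refine ⟨?_, ?_, ?_⟩
  · by_cases hs : 1 ≤ s
    · refine AD_glue _ (ADp0 r q s) (AD_phi1_ne r q s hrq) _ ?_
      rintro p ⟨z, hz⟩
      exact AD_phi1_mem r q s hq hs hrq p z hz
    · have hs0 : s = 0 := by omega
      subst hs0
      refine AD_glue ((ADf r q 0 (ADe0 hqr)).coeff 0) (ADp1 r q 0) ?_ _ ?_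
      · rw [Polynomial.coeff_zero_eq_eval_zero, ← Polynomial.eval_zero_map,
          AD_wit1 r q 0 hqr 0]
        norm_num
      · rintro p ⟨z, hz⟩
        set χ : ADR r q 0 →+* ℂ :=
          (algebraMap ℝ ℂ).comp (MvPolynomial.eval (fun v => p v.1 v.2.1 v.2.2)) with hχ
        have hF : ((ADf r q 0 (ADe0 hqr)).map χ).eval z = 0 :=
          AD_memC r q 0 (ADe0 hqr) p z hz
        have hd : ((ADf r q 0 (ADe0 hqr)).map χ).natDegree ≤ 0 := by
          simpa using le_trans Polynomial.natDegree_map_le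
            (ADf_natDegree_le r q 0 (ADe0 hqr))
        rw [Polynomial.eq_C_of_natDegree_le_zero hd, Polynomial.eval_C,
          Polynomial.coeff_map, hχ, RingHom.comp_apply] at hF
        exact (algebraMap ℝ ℂ).injective (by rw [map_zero]; exact hF)
  · refine AD_glue ((ADf r q s (ADe0 hqr)).eval 1) (ADp1 r q s) ?_ _ ?_
    · rw [show (MvPolynomial.eval (ADp1 r q s)) ((ADf r q s (ADe0 hqr)).eval 1)
          = ((ADf r q s (ADe0 hqr)).map
              (MvPolynomial.eval (ADp1 r q s) : ADR r q s →+* ℝ)).eval 1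
        from (Polynomial.eval_one_map _ _).symm, AD_wit1 r q s hqr 1]
      norm_num
    · intro p hp
      simp only [Set.mem_setOf_eq] at hp
      have hlt : (Matrix.of fun i j =>
          ∑ k : Fin (s + 1), p i j k * (1 : ℝ) ^ (k : ℕ)).rank < q :=
        lt_of_le_of_ne (Matrix.rank_le_width _) hp
      rw [show (MvPolynomial.eval (fun v => p v.1 v.2.1 v.2.2))
            ((ADf r q s (ADe0 hqr)).eval 1)
          = ((ADf r q s (ADe0 hqr)).map
              (MvPolynomial.eval (fun v => p v.1 v.2.1 v.2.2) : ADR r q s →+* ℝ)).eval 1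
        from (Polynomial.eval_one_map _ _).symm]
      exact AD_mem r q s hqr p 1 hlt
  · refine AD_glue ((ADf r q s (ADe0 hqr)).coeff 0) (ADp1 r q s) ?_ _ ?_
    · rw [Polynomial.coeff_zero_eq_eval_zero, ← Polynomial.eval_zero_map,
        AD_wit1 r q s hqr 0]
      norm_num
    · intro p hp
      simp only [Set.mem_setOf_eq] at hp
      have hlt : (Matrix.of fun i j =>
          ∑ k : Fin (s + 1), p i j k * (0 : ℝ) ^ (k : ℕ)).rank < q :=
        lt_of_le_of_ne (Matrix.rank_le_width _) hp
      rw [Polynomial.coeff_zero_eq_eval_zero, ← Polynomial.eval_zero_map]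
      exact AD_mem r q s hqr p 0 hlt
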